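/- arXiv:1610.07131 — 2 statements merged into one kernel-verified Lean document; each statement's English description precedes it below -/
import Mathlib

section
/- If h ∈ Ṽ₁, i.e. h ∈ ℍ₁ satisfies ⟨h,f⟩ ≤ 0 for every f ∈ V₁, then h(t) ≤ 0 for every t ∈ [0,∞). -/
open MeasureTheory Set Filter
open scoped ENNReal NNReal InnerProductSpace

noncomputable section

/-- Lebesgue measure on `(0, ∞)`. -/
def muPos : Measure ℝ := volume.restrict (Set.Ioi (0:ℝ))

/-- `L²([0,∞))`, the space of derivatives.  It is isometric to the Cameron–Martin
space `ℍ₁` of the Wiener process via `h ↦ h'`, `h(t) = ∫₀ᵗ h'(s) ds`; we identify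
`ℍ₁` with this Hilbert space. -/
abbrev E : Type := Lp ℝ 2 muPos

/-- The Cameron–Martin function with derivative `φ`:  `t ↦ ∫₀ᵗ φ(s) ds`. -/
def primitive (φ : E) (t : ℝ) : ℝ := ∫ s in Set.Ioc (0:ℝ) t, φ s

/-- `V₁`: elements of `ℍ₁` whose derivative admits a non-increasing version on `[0,∞)`. -/
def V1 : Set E := {φ | ∃ ψ : ℝ → ℝ, AntitoneOn ψ (Set.Ici 0) ∧ (⇑φ) =ᵐ[muPos] ψ}

/-- The polar cone of a set in a real inner product space. -/
def polar {H : Type*} [NormedAddCommGroup H] [InnerProductSpace ℝ H] (A : Set H) : Set H :=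
  {x | ∀ y ∈ A, ⟪x, y⟫_ℝ ≤ 0}

/-- `p` is the metric projection of `x` on `A` (the nearest point of `A` to `x`). -/
def IsProj {H : Type*} [NormedAddCommGroup H] (A : Set H) (x p : H) : Prop :=
  p ∈ A ∧ ∀ y ∈ A, ‖x - p‖ ≤ ‖x - y‖

/-- `ℍ_d` as a Hilbert space: `d`-tuples of elements of `ℍ₁` (identified with their
derivatives), with inner product `⟪h,g⟫ = ∑ i, ⟪hᵢ, gᵢ⟫`. -/
abbrev HD (d : ℕ) : Type := PiLp 2 (fun _ : Fin d => E)

/-- The additive function `t ↦ ∑ i, ∫₀^{tᵢ} φᵢ(s) ds` of `ℍ_d` associated with `Φ`. -/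
def addPrim {d : ℕ} (Φ : HD d) (t : Fin d → ℝ) : ℝ := ∑ i, primitive (Φ i) (t i)

/-- `V₂ = {h = h₁ + ⋯ + h_d ∈ ℍ_d : hᵢ ∈ V₁ for all i}`. -/
def V2 {d : ℕ} : Set (HD d) := {Φ | ∀ i, Φ i ∈ V1}

/-- if `h ∈ Ṽ₁`, i.e. `⟪h, f⟫ ≤ 0` for every `f ∈ V₁`, then
`h(t) ≤ 0` for every `t ∈ [0,∞)`. -/
theorem polarV1_mem_nonpos (φ : E) (hφ : φ ∈ polar V1) :
    ∀ t : ℝ, 0 ≤ t → primitive φ t ≤ 0 := by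
  intro t ht
  set g : ℝ → ℝ := (Set.Ioc (0:ℝ) t).indicator (fun _ => (1:ℝ)) with hgdef
  have hg : MemLp g 2 muPos := by
    refine memLp_indicator_const 2 measurableSet_Ioc 1 (Or.inr ?_)
    have : muPos (Set.Ioc (0:ℝ) t) ≤ volume (Set.Ioc (0:ℝ) t) := by
      exact Measure.restrict_le_self _
    refine ne_of_lt (lt_of_le_of_lt this ?_)
    simp [Real.volume_Ioc]
  set f : E := hg.toLp g with hfdef
  -- f ∈ V1
  have hfV1 : f ∈ V1 := by
    refine ⟨(Set.Icc (0:ℝ) t).indicator (fun _ => (1:ℝ)), ?_, ?_⟩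
    · intro a ha b hb hab
      by_cases hbt : b ≤ t
      · have hat : a ≤ t := le_trans hab hbt
        rw [Set.indicator_of_mem (Set.mem_Icc.mpr ⟨ha, hat⟩),
          Set.indicator_of_mem (Set.mem_Icc.mpr ⟨hb, hbt⟩)]
      · have : b ∉ Set.Icc (0:ℝ) t := fun hmem => hbt hmem.2
        rw [Set.indicator_of_notMem this]
        by_cases hat : a ∈ Set.Icc (0:ℝ) t
        · simp [Set.indicator_of_mem hat]
        · simp [Set.indicator_of_notMem hat]
    · have h1 : (⇑f) =ᵐ[muPos] g := hg.coeFn_toLp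
      refine h1.trans ?_
      have h2 : ∀ᵐ s ∂muPos, s ∈ Set.Ioi (0:ℝ) :=
        ae_restrict_mem measurableSet_Ioi
      filter_upwards [h2] with s hs
      have : s ∈ Set.Ioc (0:ℝ) t ↔ s ∈ Set.Icc (0:ℝ) t :=
        ⟨fun h => ⟨le_of_lt h.1, h.2⟩, fun h => ⟨hs, h.2⟩⟩
      simp only [hgdef]
      by_cases hmem : s ∈ Set.Ioc (0:ℝ) t
      · rw [Set.indicator_of_mem hmem, Set.indicator_of_mem (this.mp hmem)]
      · rw [Set.indicator_of_notMem hmem,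
          Set.indicator_of_notMem (fun h => hmem (this.mpr h))]
  have hinner : ⟪φ, f⟫_ℝ ≤ 0 := hφ f hfV1
  -- compute the inner product
  have hcalc : ⟪φ, f⟫_ℝ = primitive φ t := by
    rw [MeasureTheory.L2.inner_def]
    have h1 : (⇑f) =ᵐ[muPos] g := hg.coeFn_toLp
    have : ∫ a, ⟪φ a, f a⟫_ℝ ∂muPos
        = ∫ a, (Set.Ioc (0:ℝ) t).indicator (fun s => φ s) a ∂muPos := by
      refine integral_congr_ae ?_
      filter_upwards [h1] with a ha
      rw [ha]
      by_cases hmem : a ∈ Set.Ioc (0:ℝ) t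
      · simp only [hgdef, RCLike.inner_apply, Set.indicator_of_mem hmem]
        simp
      · simp only [hgdef, RCLike.inner_apply, Set.indicator_of_notMem hmem]
        simp
    rw [this, integral_indicator measurableSet_Ioc]
    have hres : muPos.restrict (Set.Ioc (0:ℝ) t) = volume.restrict (Set.Ioc (0:ℝ) t) := by
      rw [muPos, Measure.restrict_restrict measurableSet_Ioc,
        Set.inter_eq_left.mpr Set.Ioc_subset_Ioi_self]
    rw [hres, primitive]
  linarith [hcalc ▸ hinner]
end
end

section
/- For every h ∈ ℍ₁, the projection h̲ = Pr_{V₁} h is the unique solution of the minimization problem min{‖g‖ : g ∈ ℍ₁, g(t) ≥ h(t) for all t ∈ [0,∞)}; that is, h̲ ∈ ℍ₁ satisfies h̲ ≥ h pointwise, ‖h̲‖ ≤ ‖g‖ for every g ∈ ℍ₁ with g ≥ h pointwise, and any such g with ‖g‖ = ‖h̲‖ equals h̲. -/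
open MeasureTheory Set Filter
open scoped ENNReal NNReal InnerProductSpace

noncomputable section

/-! ### Auxiliary lemmas -/

instance : SFinite muPos := inferInstanceAs (SFinite (volume.restrict _))

lemma muPos_Ioc_ne_top (t : ℝ) : muPos (Set.Ioc (0:ℝ) t) ≠ ∞ := by
  rw [muPos, Measure.restrict_apply measurableSet_Ioc]
  exact ((measure_mono (Set.inter_subset_left)).trans_lt (measure_Ioc_lt_top)).ne

lemma muPos_restrict_Ioc (t : ℝ) :
    muPos.restrict (Set.Ioc (0:ℝ) t) = volume.restrict (Set.Ioc (0:ℝ) t) := by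
  rw [muPos, Measure.restrict_restrict measurableSet_Ioc,
    Set.inter_eq_left.mpr Set.Ioc_subset_Ioi_self]

lemma primitive_eq_muPos (f : E) (t : ℝ) :
    primitive f t = ∫ s in Set.Ioc (0:ℝ) t, f s ∂muPos := by
  rw [primitive, muPos_restrict_Ioc]

lemma integrableOn_E (f : E) (t : ℝ) : IntegrableOn (⇑f) (Set.Ioc (0:ℝ) t) muPos :=
  integrableOn_Lp_of_measure_ne_top f (by norm_num) (muPos_Ioc_ne_top t)

lemma primitive_sub (f g : E) (t : ℝ) :
    primitive (f - g) t = primitive f t - primitive g t := by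
  rw [primitive_eq_muPos, primitive_eq_muPos, primitive_eq_muPos,
    ← integral_sub (integrableOn_E f t) (integrableOn_E g t)]
  exact integral_congr_ae (Lp.coeFn_sub f g).restrict

/-- indicator of `(0,t]` as an element of `E` -/
def eI (t : ℝ) : E := indicatorConstLp 2 measurableSet_Ioc (muPos_Ioc_ne_top t) (1:ℝ)

lemma inner_eI (t : ℝ) (f : E) : ⟪eI t, f⟫_ℝ = primitive f t := by
  rw [eI, L2.inner_indicatorConstLp_eq_setIntegral_inner, primitive_eq_muPos]
  simp [RCLike.inner_apply]

lemma ae_pos : ∀ᵐ x ∂muPos, x ∈ Set.Ioi (0:ℝ) :=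
  ae_restrict_mem measurableSet_Ioi

lemma eI_mem_V1 {t : ℝ} (_ht : 0 ≤ t) : eI t ∈ V1 := by
  refine ⟨Set.indicator (Set.Icc 0 t) (fun _ => 1), ?_, ?_⟩
  · intro a ha b hb hab
    by_cases hbm : b ∈ Set.Icc (0:ℝ) t
    · have ham : a ∈ Set.Icc (0:ℝ) t := ⟨ha, hab.trans hbm.2⟩
      simp [Set.indicator_of_mem ham, Set.indicator_of_mem hbm]
    · rw [Set.indicator_of_notMem hbm]
      by_cases ham : a ∈ Set.Icc (0:ℝ) t <;> simp [ham]
  · refine (indicatorConstLp_coeFn).trans ?_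
    filter_upwards [ae_pos] with x hx
    have : x ∈ Set.Ioc (0:ℝ) t ↔ x ∈ Set.Icc (0:ℝ) t := by
      constructor
      · exact fun h => ⟨le_of_lt h.1, h.2⟩
      · exact fun h => ⟨hx, h.2⟩
    by_cases hm : x ∈ Set.Ioc (0:ℝ) t
    · rw [Set.indicator_of_mem hm, Set.indicator_of_mem (this.mp hm)]
    · rw [Set.indicator_of_notMem hm, Set.indicator_of_notMem (fun h => hm (this.mpr h))]

lemma add_mem_V1 {f g : E} (hf : f ∈ V1) (hg : g ∈ V1) : f + g ∈ V1 := by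
  obtain ⟨ψ, hψ, hfe⟩ := hf
  obtain ⟨χ, hχ, hge⟩ := hg
  refine ⟨ψ + χ, fun a ha b hb hab => add_le_add (hψ ha hb hab) (hχ ha hb hab), ?_⟩
  filter_upwards [Lp.coeFn_add f g, hfe, hge] with x h1 h2 h3
  simp only [h1, Pi.add_apply, h2, h3]

lemma smul_mem_V1 {c : ℝ} (hc : 0 ≤ c) {f : E} (hf : f ∈ V1) : c • f ∈ V1 := by
  obtain ⟨ψ, hψ, hfe⟩ := hf
  refine ⟨c • ψ, fun a ha b hb hab => by
    simpa using mul_le_mul_of_nonneg_left (hψ ha hb hab) hc, ?_⟩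
  filter_upwards [Lp.coeFn_smul c f, hfe] with x h1 h2
  simp [h1, h2]

lemma convex_V1 : Convex ℝ V1 := by
  intro f hf g hg a b ha hb _
  exact add_mem_V1 (smul_mem_V1 ha hf) (smul_mem_V1 hb hg)

lemma varIneq {φ p : E} (hp : IsProj V1 φ p) : ∀ y ∈ V1, ⟪φ - p, y - p⟫_ℝ ≤ 0 := by
  have hnorm : ‖φ - p‖ = ⨅ w : V1, ‖φ - w‖ := by
    haveI : Nonempty V1 := ⟨⟨p, hp.1⟩⟩
    refine le_antisymm (le_ciInf fun w => hp.2 w w.2) ?_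
    have hb : BddBelow (Set.range fun w : V1 => ‖φ - (w : E)‖) := by
      refine ⟨0, ?_⟩
      rintro _ ⟨w, rfl⟩
      exact norm_nonneg _
    exact ciInf_le hb ⟨p, hp.1⟩
  exact (norm_eq_iInf_iff_real_inner_le_zero convex_V1 hp.1).mp hnorm

lemma markov_contra (p : E) (ψ : ℝ → ℝ) (hae : (⇑p) =ᵐ[muPos] ψ) {c : ℝ} (hc : 0 < c)
    {s₀ : ℝ} (hs₀ : 0 < s₀) (h : ∀ s, s₀ ≤ s → c ≤ |ψ s|) : False := by
  have hinc : Set.Ici s₀ ⊆ Set.Ioi (0:ℝ) := fun x hx => lt_of_lt_of_le hs₀ hx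
  have hmeas : muPos (Set.Ici s₀) = ∞ := by
    rw [muPos, Measure.restrict_apply measurableSet_Ici,
      Set.inter_eq_left.mpr hinc, Real.volume_Ici]
  have hsub : ∀ᵐ x ∂muPos, x ∈ Set.Ici s₀ → x ∈ {x | (‖c‖₊ : ℝ≥0∞) ≤ ‖p x‖₊} := by
    filter_upwards [hae] with x hx hxs
    have := h x hxs
    simp only [Set.mem_setOf_eq, ENNReal.coe_le_coe, ← NNReal.coe_le_coe, coe_nnnorm,
      Real.norm_eq_abs, hx]
    calc |c| = c := abs_of_pos hc
    _ ≤ |ψ x| := this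
  have hle : muPos (Set.Ici s₀) ≤ muPos {x | (‖c‖₊ : ℝ≥0∞) ≤ ‖p x‖₊} := by
    refine le_trans (le_of_eq ?_) (measure_mono_ae (hsub.mono fun x hx => hx))
    rfl
  have hfin := Lp.meas_ge_le_mul_pow_enorm p (by norm_num) (by norm_num)
    (ε := (‖c‖₊ : ℝ≥0∞)) (by simp [nnnorm_eq_zero, hc.ne'])
  rw [hmeas] at hle
  have : (⊤ : ℝ≥0∞) ≤ (‖c‖₊ : ℝ≥0∞)⁻¹ ^ (2:ℝ≥0∞).toReal * ENNReal.ofReal ‖p‖ ^ (2:ℝ≥0∞).toReal :=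
    le_trans hle hfin
  have hlt : (‖c‖₊ : ℝ≥0∞)⁻¹ ^ (2:ℝ≥0∞).toReal * ENNReal.ofReal ‖p‖ ^ (2:ℝ≥0∞).toReal < ∞ := by
    apply ENNReal.mul_lt_top
    · exact ENNReal.rpow_lt_top_of_nonneg (by norm_num) (by simp [hc.ne'])
    · exact ENNReal.rpow_lt_top_of_nonneg (by norm_num) (by simp)
  exact absurd (lt_of_le_of_lt this hlt) (lt_irrefl _)

lemma inner_apply' (a b : ℝ) : ⟪a, b⟫_ℝ = a * b := by
  rw [RCLike.inner_apply, starRingEnd_apply, star_trivial, mul_comm]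

lemma psi_nonneg (p : E) (ψ : ℝ → ℝ) (hψ : Antitone ψ) (hae : (⇑p) =ᵐ[muPos] ψ)
    {x : ℝ} (hx : 0 < x) : 0 ≤ ψ x := by
  by_contra hneg
  push_neg at hneg
  refine markov_contra p ψ hae (c := -ψ x) (by linarith) (s₀ := x) hx fun s hs => ?_
  have := hψ hs
  rw [abs_of_neg (by linarith)]
  linarith

lemma level_integral_nonneg (u p : E) (ψ : ℝ → ℝ) (hψ : Antitone ψ)
    (hae : (⇑p) =ᵐ[muPos] ψ)
    (hu : ∀ t, 0 ≤ t → 0 ≤ ∫ s in Set.Ioc (0:ℝ) t, u s)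
    {c : ℝ} (hc : 0 < c) : 0 ≤ ∫ x in {x | c < ψ x}, u x ∂muPos := by
  have hT : MeasurableSet {x | c < ψ x} := hψ.measurable measurableSet_Ioi
  have hre : muPos.restrict {x | c < ψ x} = volume.restrict ({x | c < ψ x} ∩ Set.Ioi 0) :=
    Measure.restrict_restrict hT
  rw [hre]
  set S : Set ℝ := {x | c < ψ x} ∩ Set.Ioi 0 with hS
  rcases eq_empty_or_nonempty S with hemp | hne
  · rw [hemp]; simp
  have hbdd : BddAbove S := by
    by_contra hnb
    rw [not_bddAbove_iff] at hnb
    refine markov_contra p ψ hae hc (s₀ := 1) one_pos fun s hs => ?_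
    obtain ⟨s', hs'S, hss'⟩ := hnb s
    have h1 : c < ψ s' := hs'S.1
    have h2 : ψ s' ≤ ψ s := hψ hss'.le
    rw [abs_of_pos (by linarith)]
    linarith
  set r : ℝ := sSup S with hr
  obtain ⟨s, hsS⟩ := hne
  have hs_pos : (0:ℝ) < s := hsS.2
  have hsr : s ≤ r := le_csSup hbdd hsS
  have hr_pos : 0 < r := lt_of_lt_of_le hs_pos hsr
  have hsub1 : S ⊆ Set.Ioc 0 r := fun x hx => ⟨hx.2, le_csSup hbdd hx⟩
  have hsub2 : Set.Ioo 0 r ⊆ S := by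
    intro x hx
    obtain ⟨s', hs'S, hxs'⟩ := exists_lt_of_lt_csSup ⟨s, hsS⟩ hx.2
    exact ⟨lt_of_lt_of_le hs'S.1 (hψ hxs'.le), hx.1⟩
  have haeq : S =ᵐ[volume] Set.Ioc 0 r := by
    rw [Filter.eventuallyEq_set]
    have h1 : Set.Ioo 0 r =ᵐ[volume] Set.Ioc 0 r := Ioo_ae_eq_Ioc
    rw [Filter.eventuallyEq_set] at h1
    filter_upwards [h1] with x hx
    constructor
    · exact fun h => hsub1 h
    · exact fun h => hsub2 (hx.mpr h)
  calc (0:ℝ) ≤ ∫ x in Set.Ioc (0:ℝ) r, u x ∂volume := hu r hr_pos.le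
  _ = ∫ x in S, u x ∂volume := (setIntegral_congr_set haeq).symm

lemma inner_nonneg_key (u p : E) (ψ : ℝ → ℝ) (hψ : Antitone ψ)
    (hae : (⇑p) =ᵐ[muPos] ψ)
    (hu : ∀ t, 0 ≤ t → 0 ≤ ∫ s in Set.Ioc (0:ℝ) t, u s) : 0 ≤ ⟪u, p⟫_ℝ := by
  have hψm : Measurable ψ := hψ.measurable
  set f : ℝ → ℝ → ℝ := fun x c => Set.indicator (Set.Ioo 0 (ψ x)) (fun _ => u x) c with hf
  have hA : MeasurableSet {q : ℝ × ℝ | 0 < q.2 ∧ q.2 < ψ q.1} := by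
    rw [Set.setOf_and]
    exact (measurable_snd measurableSet_Ioi).inter
      (measurableSet_lt measurable_snd (hψm.comp measurable_fst))
  have huncurry : Function.uncurry f =
      Set.indicator {q : ℝ × ℝ | 0 < q.2 ∧ q.2 < ψ q.1} (fun q => u q.1) := by
    funext q
    rw [Function.uncurry]
    simp only [hf, Set.indicator_apply, Set.mem_Ioo, Set.mem_setOf_eq]
  have hAESM : AEStronglyMeasurable (Function.uncurry f) (muPos.prod volume) := by
    rw [huncurry]
    exact ((Lp.aestronglyMeasurable u).comp_fst).indicator hA
  have hInt : Integrable (Function.uncurry f) (muPos.prod volume) := by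
    rw [integrable_prod_iff hAESM]
    constructor
    · refine Filter.Eventually.of_forall fun x => ?_
      have : Integrable ((Set.Ioo (0:ℝ) (ψ x)).indicator fun _ => (u x : ℝ)) volume :=
        (integrableOn_const measure_Ioo_lt_top.ne).integrable_indicator
          measurableSet_Ioo
      exact this
    · have hcalc : (fun x => ∫ (y : ℝ), ‖Function.uncurry f (x, y)‖) =
          fun x => max (ψ x) 0 * ‖u x‖ := by
        funext x
        show (∫ c, ‖f x c‖ ∂volume) = _
        have : (fun c => ‖f x c‖) =
            Set.indicator (Set.Ioo 0 (ψ x)) (fun _ => ‖u x‖) := by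
          funext c
          rw [hf]
          exact norm_indicator_eq_indicator_norm _ _
        rw [this, integral_indicator_const _ measurableSet_Ioo, Real.volume_real_Ioo,
          smul_eq_mul, sub_zero]
      rw [hcalc]
      refine Integrable.mono' ((L2.integrable_inner (𝕜 := ℝ) u p).abs) ?_ ?_
      · exact ((hψm.max measurable_const).aestronglyMeasurable.mul
          (Lp.aestronglyMeasurable u).norm)
      · filter_upwards [hae] with x hx
        have h1 : max (ψ x) 0 ≤ |ψ x| := max_le (le_abs_self _) (abs_nonneg _)
        calc ‖max (ψ x) 0 * ‖(⇑u : ℝ → ℝ) x‖‖ = max (ψ x) 0 * |(⇑u : ℝ → ℝ) x| := by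
              rw [Real.norm_eq_abs, abs_mul, abs_of_nonneg (le_max_right (ψ x) 0), abs_norm,
                Real.norm_eq_abs]
        _ ≤ |ψ x| * |(⇑u : ℝ → ℝ) x| := mul_le_mul_of_nonneg_right h1 (abs_nonneg _)
        _ = |⟪(⇑u : ℝ → ℝ) x, (⇑p : ℝ → ℝ) x⟫_ℝ| := by
              rw [inner_apply', abs_mul, hx, mul_comm]
  have hswap := integral_integral_swap hInt
  have hLHS : ∫ x, ∫ c, f x c ∂volume ∂muPos = ⟪u, p⟫_ℝ := by
    rw [L2.inner_def]
    refine integral_congr_ae ?_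
    filter_upwards [hae, ae_pos] with x hx hxpos
    have hnn : 0 ≤ ψ x := psi_nonneg p ψ hψ hae hxpos
    rw [hf]
    simp only
    rw [integral_indicator_const _ measurableSet_Ioo, Real.volume_real_Ioo, sub_zero,
      max_eq_left hnn, smul_eq_mul, inner_apply', hx, mul_comm]
  have hRHS : 0 ≤ ∫ c, ∫ x, f x c ∂muPos ∂volume := by
    refine integral_nonneg fun c => ?_
    rw [Pi.zero_apply]
    rcases le_or_gt c 0 with hc | hc
    · have : (fun x => f x c) = fun _ => (0:ℝ) := by
        funext x
        rw [hf]
        simp only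
        rw [Set.indicator_of_notMem]
        intro hmem
        exact absurd hmem.1 (not_lt.mpr hc)
      rw [this, integral_zero]
    · have : (fun x => f x c) = Set.indicator {x | c < ψ x} (⇑u) := by
        funext x
        rw [hf]
        simp only [Set.indicator_apply, Set.mem_Ioo, Set.mem_setOf_eq]
        by_cases h : c < ψ x
        · simp [h, hc]
        · simp [h]
      have hT : MeasurableSet {x : ℝ | c < ψ x} := hψm measurableSet_Ioi
      rw [this, integral_indicator hT]
      exact level_integral_nonneg u p ψ hψ hae hu hc
  rw [← hLHS, hswap]
  exact hRHS

lemma antitone_ext {p : E} (hp : p ∈ V1) : ∃ ψ : ℝ → ℝ, Antitone ψ ∧ (⇑p) =ᵐ[muPos] ψ := by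
  obtain ⟨ψ, hψ, hae⟩ := hp
  refine ⟨fun x => if 0 ≤ x then ψ x else ψ 0, ?_, ?_⟩
  · intro a b hab
    by_cases ha : 0 ≤ a
    · have hb : 0 ≤ b := ha.trans hab
      simp only [if_pos ha, if_pos hb]
      exact hψ ha hb hab
    · by_cases hb : 0 ≤ b
      · simp only [if_neg ha, if_pos hb]
        exact hψ (le_refl (0:ℝ)) hb hb
      · simp only [if_neg ha, if_neg hb, le_refl]
  · filter_upwards [hae, ae_pos] with x hx hxpos
    rw [hx, if_pos hxpos.le]

/-- `h̲ = Pr_{V₁} h` is the unique solution of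
`min{‖g‖ : g ∈ ℍ₁, g ≥ h on [0,∞)}`: it majorizes `h`, it has minimal norm among
all majorants in `ℍ₁`, and any majorant of the same norm coincides with it. -/
theorem proj_V1_solves_minimization (φ p : E) (hp : IsProj V1 φ p) :
    (∀ t : ℝ, 0 ≤ t → primitive φ t ≤ primitive p t) ∧
    (∀ g : E, (∀ t : ℝ, 0 ≤ t → primitive φ t ≤ primitive g t) → ‖p‖ ≤ ‖g‖) ∧
    (∀ g : E, (∀ t : ℝ, 0 ≤ t → primitive φ t ≤ primitive g t) → ‖g‖ = ‖p‖ → g = p) := by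
  have hvar := varIneq hp
  -- orthogonality : ⟪φ - p, p⟫ = 0
  have h0 : ⟪φ - p, p⟫_ℝ = 0 := by
    have hle : ⟪φ - p, p⟫_ℝ ≤ 0 := by
      have := hvar ((2:ℝ) • p) (smul_mem_V1 (by norm_num) hp.1)
      have h2 : (2:ℝ) • p - p = p := by
        rw [two_smul]; abel
      rwa [h2] at this
    have hge : 0 ≤ ⟪φ - p, p⟫_ℝ := by
      have := hvar 0 ⟨0, fun _ _ _ _ _ => le_refl 0,
        by filter_upwards [Lp.coeFn_zero (E := ℝ) (p := 2) (μ := muPos)] with x h; simpa using h⟩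
      rw [zero_sub, inner_neg_right] at this
      linarith
    linarith
  obtain ⟨ψ, hψ, hae⟩ := antitone_ext hp.1
  -- claim 1
  have claim1 : ∀ t : ℝ, 0 ≤ t → primitive φ t ≤ primitive p t := by
    intro t ht
    have h := hvar (p + eI t) (add_mem_V1 hp.1 (eI_mem_V1 ht))
    rw [add_sub_cancel_left] at h
    rw [real_inner_comm, inner_eI, primitive_sub] at h
    linarith
  -- main inequality : ∀ majorant g, ‖p‖² ≤ ⟪g, p⟫
  have hmain : ∀ g : E, (∀ t : ℝ, 0 ≤ t → primitive φ t ≤ primitive g t) →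
      ‖p‖ ^ 2 ≤ ⟪g, p⟫_ℝ := by
    intro g hg
    have hu : ∀ t, 0 ≤ t → 0 ≤ ∫ s in Set.Ioc (0:ℝ) t, (g - φ : E) s := by
      intro t ht
      have : primitive (g - φ) t = primitive g t - primitive φ t := primitive_sub g φ t
      have h2 := hg t ht
      rw [primitive] at this
      linarith
    have hkey : 0 ≤ ⟪g - φ, p⟫_ℝ := inner_nonneg_key (g - φ) p ψ hψ hae hu
    have hdecomp : ⟪g, p⟫_ℝ = ⟪g - φ, p⟫_ℝ + ⟪φ - p, p⟫_ℝ + ⟪p, p⟫_ℝ := by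
      rw [← inner_add_left, ← inner_add_left]
      congr 1
      abel
    rw [hdecomp, h0, real_inner_self_eq_norm_sq]
    linarith
  refine ⟨claim1, ?_, ?_⟩
  · intro g hg
    have h1 := hmain g hg
    have h2 : ⟪g, p⟫_ℝ ≤ ‖g‖ * ‖p‖ := real_inner_le_norm g p
    by_cases hp0 : ‖p‖ = 0
    · rw [hp0]; exact norm_nonneg g
    · have hppos : 0 < ‖p‖ := (norm_nonneg p).lt_of_ne' hp0
      nlinarith
  · intro g hg hnorm
    have h1 := hmain g hg
    have hsq : ‖g - p‖ ^ 2 ≤ 0 := by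
      rw [norm_sub_sq_real, hnorm]
      linarith
    have : ‖g - p‖ = 0 := by
      have := sq_nonneg ‖g - p‖
      have h2 : ‖g - p‖ ^ 2 = 0 := le_antisymm hsq this
      exact pow_eq_zero_iff (by norm_num) |>.mp h2
    rw [norm_sub_eq_zero_iff] at this
    exact this
end
end
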